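/- Let H : ℂ^{m×n} → ℂ^{m×n} be linear and self-adjoint with respect to the complex Frobenius inner product, and define E(Y) = ⟨Y, H[Y]⟩. Let Û ∈ ℂ^{m×k}, V̂ ∈ ℂ^{n×k} satisfy Û*Û = I_k, V̂*V̂ = I_k, and let S : ℝ → ℂ^{k×k} be differentiable on [t0, t1] with S'(t) = −i Û* H[Û S(t) V̂*] V̂. Suppose Y0 = Û S(t0) V̂*, set Ŷ1 = Û S(t1) V̂*, and let Y1 ∈ ℂ^{m×n} satisfy ‖Y1 − Ŷ1‖_F ≤ ϑ. Then |E(Y1) − E(Y0)| ≤ ϑ · ‖H[Y1] + H[Ŷ1]‖_F. -/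

import Mathlib

open Matrix

noncomputable def cfrobInner {m n : ℕ} (A B : Matrix (Fin m) (Fin n) ℂ) : ℂ :=
  (Aᴴ * B).trace

noncomputable def cfrobNorm {m n : ℕ} (A : Matrix (Fin m) (Fin n) ℂ) : ℝ :=
  Real.sqrt (cfrobInner A A).re

namespace RAS

noncomputable def toEuc {m n : ℕ} (A : Matrix (Fin m) (Fin n) ℂ) :
    EuclideanSpace ℂ (Fin m × Fin n) := WithLp.toLp 2 (fun p : Fin m × Fin n => A p.1 p.2)

lemma cfrobInner_eq_sum {m n : ℕ} (A B : Matrix (Fin m) (Fin n) ℂ) :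
    cfrobInner A B = ∑ j, ∑ i, star (A i j) * B i j := by
  simp [cfrobInner, Matrix.trace, Matrix.diag, Matrix.mul_apply, Matrix.conjTranspose_apply]

lemma cfrobInner_eq_inner {m n : ℕ} (A B : Matrix (Fin m) (Fin n) ℂ) :
    cfrobInner A B = inner ℂ (toEuc A) (toEuc B) := by
  rw [cfrobInner_eq_sum, PiLp.inner_apply]
  simp only [RCLike.inner_apply', starRingEnd_apply, toEuc, PiLp.toLp_apply]
  rw [← Finset.sum_product', Finset.univ_product_univ]
  exact Fintype.sum_equiv (Equiv.prodComm _ _) _ _ (fun x => rfl)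

lemma toEuc_sub {m n : ℕ} (A B : Matrix (Fin m) (Fin n) ℂ) :
    toEuc (A - B) = toEuc A - toEuc B := by rw [toEuc, toEuc, toEuc, ← WithLp.toLp_sub]; rfl

lemma cfrobNorm_eq {m n : ℕ} (A : Matrix (Fin m) (Fin n) ℂ) :
    cfrobNorm A = ‖toEuc A‖ := by
  rw [cfrobNorm, cfrobInner_eq_inner]
  rw [show (inner ℂ (toEuc A) (toEuc A) : ℂ).re = ‖toEuc A‖ ^ 2 from by
    exact_mod_cast inner_self_eq_norm_sq (𝕜 := ℂ) (toEuc A)]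
  exact Real.sqrt_sq (norm_nonneg _)

lemma abs_cfrobInner_le {m n : ℕ} (A B : Matrix (Fin m) (Fin n) ℂ) :
    ‖cfrobInner A B‖ ≤ cfrobNorm A * cfrobNorm B := by
  rw [cfrobInner_eq_inner, cfrobNorm_eq, cfrobNorm_eq]
  exact norm_inner_le_norm _ _

lemma cfrobInner_conj {m n : ℕ} (A B : Matrix (Fin m) (Fin n) ℂ) :
    (starRingEnd ℂ) (cfrobInner A B) = cfrobInner B A := by
  rw [cfrobInner, cfrobInner, starRingEnd_apply, ← Matrix.trace_conjTranspose,
    Matrix.conjTranspose_mul, Matrix.conjTranspose_conjTranspose]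

lemma cfrobInner_add_left {m n : ℕ} (A B C : Matrix (Fin m) (Fin n) ℂ) :
    cfrobInner (A + B) C = cfrobInner A C + cfrobInner B C := by
  simp [cfrobInner, Matrix.conjTranspose_add, Matrix.add_mul]

lemma cfrobInner_add_right {m n : ℕ} (A B C : Matrix (Fin m) (Fin n) ℂ) :
    cfrobInner A (B + C) = cfrobInner A B + cfrobInner A C := by
  simp [cfrobInner, Matrix.mul_add]

lemma cfrobInner_smul_left {m n : ℕ} (c : ℂ) (A B : Matrix (Fin m) (Fin n) ℂ) :
    cfrobInner (c • A) B = star c * cfrobInner A B := by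
  rw [cfrobInner, cfrobInner, Matrix.conjTranspose_smul, Matrix.smul_mul, Matrix.trace_smul,
    smul_eq_mul]

lemma cfrobInner_smul_right {m n : ℕ} (c : ℂ) (A B : Matrix (Fin m) (Fin n) ℂ) :
    cfrobInner A (c • B) = c * cfrobInner A B := by
  simp [cfrobInner, Matrix.mul_smul]

end RAS

namespace RAS

attribute [local instance] Matrix.normedAddCommGroup Matrix.normedSpace

noncomputable def sandwichLM {m n k : ℕ} (U : Matrix (Fin m) (Fin k) ℂ)
    (V : Matrix (Fin n) (Fin k) ℂ) :
    Matrix (Fin k) (Fin k) ℂ →ₗ[ℂ] Matrix (Fin m) (Fin n) ℂ where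
  toFun M := U * M * Vᴴ
  map_add' X Y := by simp [Matrix.mul_add, Matrix.add_mul]
  map_smul' c X := by simp [Matrix.mul_smul, Matrix.smul_mul]

theorem main
    {m n k : ℕ} {t0 t1 ϑ : ℝ}
    (H : Matrix (Fin m) (Fin n) ℂ →ₗ[ℂ] Matrix (Fin m) (Fin n) ℂ)
    (hH : ∀ Y Z, cfrobInner (H Y) Z = cfrobInner Y (H Z))
    (Uhat : Matrix (Fin m) (Fin k) ℂ) (Vhat : Matrix (Fin n) (Fin k) ℂ)
    (hU : Uhatᴴ * Uhat = 1) (hV : Vhatᴴ * Vhat = 1)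
    (S : ℝ → Matrix (Fin k) (Fin k) ℂ)
    (ht : t0 ≤ t1)
    (hS : ∀ t ∈ Set.Icc t0 t1, ∀ i j,
      HasDerivAt (fun s => S s i j)
        (((-Complex.I) • (Uhatᴴ * H (Uhat * S t * Vhatᴴ) * Vhat)) i j) t)
    (Y0 Yhat1 Y1 : Matrix (Fin m) (Fin n) ℂ)
    (hY0 : Y0 = Uhat * S t0 * Vhatᴴ)
    (hYhat1 : Yhat1 = Uhat * S t1 * Vhatᴴ)
    (hY1 : cfrobNorm (Y1 - Yhat1) ≤ ϑ) :
    ‖cfrobInner Y1 (H Y1) - cfrobInner Y0 (H Y0)‖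
      ≤ ϑ * cfrobNorm (H Y1 + H Yhat1) := by
  classical
  -- Part 1: energy conservation along the flow
  have key0 : ∀ t ∈ Set.Icc t0 t1,
      HasDerivAt (fun s => cfrobInner (Uhat * S s * Vhatᴴ) (H (Uhat * S s * Vhatᴴ))) 0 t := by
    intro t htI
    set Z : Matrix (Fin m) (Fin n) ℂ := H (Uhat * S t * Vhatᴴ) with hZ
    set X : Matrix (Fin k) (Fin k) ℂ := Uhatᴴ * Z * Vhat with hX
    set Sd : Matrix (Fin k) (Fin k) ℂ := (-Complex.I) • X with hSdd
    have hSmat : HasDerivAt S Sd t :=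
      hasDerivAt_pi.2 fun i => hasDerivAt_pi.2 fun j => hS t htI i j
    set Ad : Matrix (Fin m) (Fin n) ℂ := Uhat * Sd * Vhatᴴ with hAdd
    have hAmat : HasDerivAt (fun s => Uhat * S s * Vhatᴴ) Ad t := by
      exact ((LinearMap.toContinuousLinearMap
        (sandwichLM Uhat Vhat)).restrictScalars ℝ).hasFDerivAt.comp_hasDerivAt t hSmat
    have hHmat : HasDerivAt (fun s => H (Uhat * S s * Vhatᴴ)) (H Ad) t := by
      exact ((LinearMap.toContinuousLinearMap
        H).restrictScalars ℝ).hasFDerivAt.comp_hasDerivAt t hAmat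
    have hfd : HasDerivAt (fun s => cfrobInner (Uhat * S s * Vhatᴴ) (H (Uhat * S s * Vhatᴴ)))
        (cfrobInner Ad Z + cfrobInner (Uhat * S t * Vhatᴴ) (H Ad)) t := by
      have hsum : ∀ (j : Fin n) (i : Fin m),
          HasDerivAt (fun s => star ((Uhat * S s * Vhatᴴ) i j) * (H (Uhat * S s * Vhatᴴ)) i j)
            (star (Ad i j) * Z i j + star ((Uhat * S t * Vhatᴴ) i j) * (H Ad) i j) t := by
        intro j i
        have h1 : HasDerivAt (fun s => (Uhat * S s * Vhatᴴ) i j) (Ad i j) t :=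
          hasDerivAt_pi.1 (hasDerivAt_pi.1 hAmat i) j
        have h2 : HasDerivAt (fun s => (H (Uhat * S s * Vhatᴴ)) i j) ((H Ad) i j) t :=
          hasDerivAt_pi.1 (hasDerivAt_pi.1 hHmat i) j
        exact h1.star.mul h2
      have hbig : HasDerivAt
          (fun s => ∑ j, ∑ i, star ((Uhat * S s * Vhatᴴ) i j) * (H (Uhat * S s * Vhatᴴ)) i j)
          (∑ j, ∑ i, (star (Ad i j) * Z i j
            + star ((Uhat * S t * Vhatᴴ) i j) * (H Ad) i j)) t :=
        HasDerivAt.fun_sum fun j _ => HasDerivAt.fun_sum fun i _ => hsum j i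
      have hfun : (fun s => cfrobInner (Uhat * S s * Vhatᴴ) (H (Uhat * S s * Vhatᴴ)))
          = (fun s => ∑ j, ∑ i, star ((Uhat * S s * Vhatᴴ) i j)
              * (H (Uhat * S s * Vhatᴴ)) i j) :=
        funext fun s => cfrobInner_eq_sum _ _
      have hval : cfrobInner Ad Z + cfrobInner (Uhat * S t * Vhatᴴ) (H Ad)
          = ∑ j, ∑ i, (star (Ad i j) * Z i j
              + star ((Uhat * S t * Vhatᴴ) i j) * (H Ad) i j) := by
        rw [cfrobInner_eq_sum Ad Z, cfrobInner_eq_sum (Uhat * S t * Vhatᴴ) (H Ad)]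
        rw [← Finset.sum_add_distrib]
        exact Finset.sum_congr rfl fun j _ => (Finset.sum_add_distrib).symm
      rw [hfun, hval]
      exact hbig
    have hAdW : Ad = (-Complex.I) • (Uhat * X * Vhatᴴ) := by
      rw [hAdd, hSdd, Matrix.mul_smul, Matrix.smul_mul]
    have htr : cfrobInner (Uhat * X * Vhatᴴ) Z = cfrobInner Z (Uhat * X * Vhatᴴ) := by
      have e1 : cfrobInner (Uhat * X * Vhatᴴ) Z = (Xᴴ * X).trace := by
        rw [cfrobInner]
        rw [show (Uhat * X * Vhatᴴ)ᴴ * Z = Vhat * ((Xᴴ * Uhatᴴ) * Z) by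
          simp [Matrix.conjTranspose_mul, Matrix.mul_assoc]]
        rw [Matrix.trace_mul_comm]
        rw [show Xᴴ * Uhatᴴ * Z * Vhat = Xᴴ * X by rw [hX]; simp [Matrix.mul_assoc]]
      have e2 : cfrobInner Z (Uhat * X * Vhatᴴ) = (Xᴴ * X).trace := by
        rw [cfrobInner]
        rw [show Zᴴ * (Uhat * X * Vhatᴴ) = (Zᴴ * Uhat * X) * Vhatᴴ by
          simp [Matrix.mul_assoc]]
        rw [Matrix.trace_mul_comm]
        rw [show Vhatᴴ * (Zᴴ * Uhat * X) = Xᴴ * X by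
          rw [hX]; simp [Matrix.conjTranspose_mul, Matrix.mul_assoc]]
      rw [e1, e2]
    have hzero : cfrobInner Ad Z + cfrobInner (Uhat * S t * Vhatᴴ) (H Ad) = 0 := by
      rw [hAdW, cfrobInner_smul_left, _root_.map_smul, cfrobInner_smul_right,
        ← hH (Uhat * S t * Vhatᴴ), ← hZ, htr]
      have hsI : star (-Complex.I) = Complex.I := by simp
      rw [hsI]
      ring
    rw [← hzero]
    exact hfd
  have hcont : ContinuousOn (fun s => cfrobInner (Uhat * S s * Vhatᴴ) (H (Uhat * S s * Vhatᴴ)))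
      (Set.Icc t0 t1) := fun x hx => (key0 x hx).continuousAt.continuousWithinAt
  have hconst := constant_of_has_deriv_right_zero hcont
    (fun x hx => (key0 x (Set.mem_Icc_of_Ico hx)).hasDerivWithinAt)
  have hE : cfrobInner Yhat1 (H Yhat1) = cfrobInner Y0 (H Y0) := by
    have := hconst t1 (Set.right_mem_Icc.2 ht)
    rw [hY0, hYhat1]
    simpa using this
  -- Part 2
  set D : Matrix (Fin m) (Fin n) ℂ := Y1 - Yhat1 with hD
  have hY1D : Y1 = Yhat1 + D := by rw [hD, add_sub_cancel]
  set w : ℂ := cfrobInner D (H Y1 + H Yhat1) with hw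
  set z : ℂ := cfrobInner Y1 (H Y1) - cfrobInner Yhat1 (H Yhat1) with hz
  have hdecomp : z = cfrobInner D (H Y1) + (starRingEnd ℂ) (cfrobInner D (H Yhat1)) := by
    rw [hz, cfrobInner_conj, hH Yhat1 D, hY1D]
    simp only [map_add, cfrobInner_add_left, cfrobInner_add_right]
    ring
  have hc : ∀ Y, (starRingEnd ℂ) (cfrobInner Y (H Y)) = cfrobInner Y (H Y) := fun Y => by
    rw [cfrobInner_conj, hH]
  have hzz : (starRingEnd ℂ) z = z := by rw [hz, map_sub, hc, hc]
  have him : z.im = 0 := by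
    have := congrArg Complex.im hzz
    simp only [Complex.conj_im] at this
    linarith
  have hre : z.re = w.re := by
    rw [hdecomp, hw, cfrobInner_add_right]
    simp
  have hz_eq : z = ((w.re : ℝ) : ℂ) := Complex.ext (by simpa using hre) (by simpa using him)
  have hbound : ‖w‖ ≤ cfrobNorm D * cfrobNorm (H Y1 + H Yhat1) :=
    abs_cfrobInner_le _ _
  have hN : (0:ℝ) ≤ cfrobNorm (H Y1 + H Yhat1) := Real.sqrt_nonneg _
  calc ‖cfrobInner Y1 (H Y1) - cfrobInner Y0 (H Y0)‖
      = ‖z‖ := by rw [hz, hE]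
    _ = |w.re| := by rw [hz_eq, Complex.norm_real, Real.norm_eq_abs]
    _ ≤ ‖w‖ := Complex.abs_re_le_norm w
    _ ≤ cfrobNorm D * cfrobNorm (H Y1 + H Yhat1) := hbound
    _ ≤ ϑ * cfrobNorm (H Y1 + H Yhat1) := mul_le_mul_of_nonneg_right hY1 hN

end RAS

/-- Theorem 6: one step of the rank-adaptive integrator applied to the matrix Schrödinger
equation `i Ȧ = H[A]` preserves the energy `E(Y) = ⟨Y, H[Y]⟩` up to
`ϑ · ‖H[Y₁] + H[Ŷ₁]‖_F`. -/
theorem rank_adaptive_schroedinger_energy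
    {m n k : ℕ} {t0 t1 ϑ : ℝ}
    (H : Matrix (Fin m) (Fin n) ℂ →ₗ[ℂ] Matrix (Fin m) (Fin n) ℂ)
    (hH : ∀ Y Z, cfrobInner (H Y) Z = cfrobInner Y (H Z))
    (Uhat : Matrix (Fin m) (Fin k) ℂ) (Vhat : Matrix (Fin n) (Fin k) ℂ)
    (hU : Uhatᴴ * Uhat = 1) (hV : Vhatᴴ * Vhat = 1)
    (S : ℝ → Matrix (Fin k) (Fin k) ℂ)
    (ht : t0 ≤ t1)
    (hS : ∀ t ∈ Set.Icc t0 t1, ∀ i j,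
      HasDerivAt (fun s => S s i j)
        (((-Complex.I) • (Uhatᴴ * H (Uhat * S t * Vhatᴴ) * Vhat)) i j) t)
    (Y0 Yhat1 Y1 : Matrix (Fin m) (Fin n) ℂ)
    (hY0 : Y0 = Uhat * S t0 * Vhatᴴ)
    (hYhat1 : Yhat1 = Uhat * S t1 * Vhatᴴ)
    (hY1 : cfrobNorm (Y1 - Yhat1) ≤ ϑ) :
    ‖cfrobInner Y1 (H Y1) - cfrobInner Y0 (H Y0)‖
      ≤ ϑ * cfrobNorm (H Y1 + H Yhat1) := by
  exact RAS.main H hH Uhat Vhat hU hV S ht hS Y0 Yhat1 Y1 hY0 hYhat1 hY1
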